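/- arXiv:2302.08316 — 4 statements merged into one kernel-verified Lean document; each statement's English description precedes it below -/
import Mathlib

section
/- Let R be a commutative k-algebra such that Ω¹(R) is a finitely generated projective R-module, and let p ∈ ℕ. The R-linear map α : Λ^p_R Der_k(R) → {alternating k-multilinear maps R^p → R} determined by α(ξ_1∧…∧ξ_p)(a_1,…,a_p) = det(ξ_i(a_j))_{1≤i,j≤p} is injective and its image is exactly 𝔛^p(R); thus Λ^p_R Der_k(R) ≅ 𝔛^p(R) as R-modules. -/
set_option maxHeartbeats 2000000
set_option synthInstance.maxHeartbeats 400000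

noncomputable section

/-- The wedge product `v 0 ∧ ⋯ ∧ v (n-1)`, as an element of the `n`-th exterior power. -/
def wedge {R M : Type*} [CommRing R] [AddCommGroup M] [Module R M] (n : ℕ) (v : Fin n → M) :
    ⋀[R]^n M :=
  ⟨ExteriorAlgebra.ιMulti R n v, ExteriorAlgebra.ιMulti_range R n (Set.mem_range_self v)⟩

/-- `F : R^p → M` is a `p`-fold multiderivation: alternating, `k`-multilinear and a
`k`-derivation in each argument. -/
def IsMultiDeriv (k : Type*) {R M : Type*} [CommRing k] [CommRing R] [Algebra k R]
    [AddCommGroup M] [Module R M] [Module k M] (p : ℕ) (F : (Fin p → R) → M) : Prop :=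
  (∀ (a : Fin p → R) (i : Fin p) (x y : R),
      F (Function.update a i (x + y)) = F (Function.update a i x) + F (Function.update a i y)) ∧
  (∀ (a : Fin p → R) (i : Fin p) (c : k) (x : R),
      F (Function.update a i (c • x)) = c • F (Function.update a i x)) ∧
  (∀ (a : Fin p → R) (i j : Fin p), i ≠ j → a i = a j → F a = 0) ∧
  (∀ (a : Fin p → R) (i : Fin p) (x y : R),
      F (Function.update a i (x * y)) =
        x • F (Function.update a i y) + y • F (Function.update a i x))

section Aux

open Finset

/-- A finitely generated module admits a finite generating family inside any spanning set. -/
private lemma exists_fin_subset_span {R M : Type*} [CommRing R] [AddCommGroup M] [Module R M]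
    [Module.Finite R M] (S : Set M) (hS : Submodule.span R S = ⊤) :
    ∃ (n : ℕ) (v : Fin n → M), (∀ i, v i ∈ S) ∧ Submodule.span R (Set.range v) = ⊤ := by
  obtain ⟨m, w, hw⟩ := Module.Finite.exists_fin (R := R) (M := M)
  have hmem : ∀ j : Fin m, w j ∈ Submodule.span R S := by rw [hS]; intro j; trivial
  choose n' f g hfg using fun j : Fin m => (Submodule.mem_span_set'.mp (hmem j))
  let ι := (j : Fin m) × Fin (n' j)
  let u : ι → M := fun t => (g t.1 t.2 : M)
  have hu : Submodule.span R (Set.range u) = ⊤ := by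
    rw [← top_le_iff, ← hw, Submodule.span_le]
    rintro _ ⟨j, rfl⟩
    rw [← hfg j]
    exact Submodule.sum_mem _ fun i _ =>
      Submodule.smul_mem _ _ (Submodule.subset_span ⟨⟨j, i⟩, rfl⟩)
  refine ⟨Fintype.card ι, u ∘ (Fintype.equivFin ι).symm, fun t => (g _ _).2, ?_⟩
  rw [Set.range_comp, Equiv.range_eq_univ, Set.image_univ, hu]

/-- Grouping of a sum over all tuples of indices against an alternating function into a sum
over strictly increasing tuples (i.e. subsets) with determinant coefficients. -/
private lemma sum_alternating_grouping {R N : Type*} [CommRing R] [AddCommGroup N] [Module R N]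
    {p n : ℕ} (c : Fin p → Fin n → R) (g : (Fin p → Fin n) → N)
    (hg0 : ∀ m : Fin p → Fin n, ∀ i j : Fin p, i ≠ j → m i = m j → g m = 0)
    (hgperm : ∀ (m : Fin p → Fin n) (σ : Equiv.Perm (Fin p)),
        g (m ∘ σ) = Equiv.Perm.sign σ • g m) :
    ∑ m : Fin p → Fin n, (∏ r, c r (m r)) • g m
      = ∑ s : {s : Finset (Fin n) // s.card = p},
          (Matrix.det (Matrix.of fun r t => c r (s.1.orderEmbOfFin s.2 t))) •
            g (fun t => s.1.orderEmbOfFin s.2 t) := by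
  classical
  set E : {s : Finset (Fin n) // s.card = p} → Fin p → Fin n :=
    fun s t => s.1.orderEmbOfFin s.2 t with hE
  have h0 : ∑ m ∈ univ.filter (fun m : Fin p → Fin n => ¬ Function.Injective m),
      (∏ r, c r (m r)) • g m = 0 := by
    refine Finset.sum_eq_zero fun m hm => ?_
    rw [mem_filter] at hm
    obtain ⟨i, j, hij, hne⟩ := Function.not_injective_iff.mp hm.2
    rw [hg0 m i j hne hij, smul_zero]
  have key : ∀ s : {s : Finset (Fin n) // s.card = p},
      ∑ σ : Equiv.Perm (Fin p), (∏ r, c r (E s (σ r))) • g (E s ∘ σ)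
        = (Matrix.det (Matrix.of fun r t => c r (E s t))) • g (E s) := by
    intro s
    have step1 : ∀ σ : Equiv.Perm (Fin p),
        (∏ r, c r (E s (σ r))) • g (E s ∘ σ)
          = (((Equiv.Perm.sign σ : ℤ) : R) * ∏ r, c r (E s (σ r))) • g (E s) := by
      intro σ
      rw [hgperm (E s) σ, Units.smul_def, mul_smul, Int.cast_smul_eq_zsmul, smul_comm]
    calc ∑ σ : Equiv.Perm (Fin p), (∏ r, c r (E s (σ r))) • g (E s ∘ σ)
        = ∑ σ : Equiv.Perm (Fin p),
            (((Equiv.Perm.sign σ : ℤ) : R) * ∏ r, c r (E s (σ r))) • g (E s) :=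
          Finset.sum_congr rfl fun σ _ => step1 σ
      _ = ∑ σ : Equiv.Perm (Fin p),
            (((Equiv.Perm.sign σ : ℤ) : R) * ∏ i, c (σ i) (E s i)) • g (E s) := by
          refine Fintype.sum_equiv (Equiv.inv (Equiv.Perm (Fin p))) _ _ fun σ => ?_
          have hprod : ∏ r, c r (E s (σ r)) = ∏ i, c (σ⁻¹ i) (E s i) := by
            rw [← Equiv.prod_comp σ (fun i => c (σ⁻¹ i) (E s i))]
            simp
          simp only [Equiv.inv_apply, hprod, Equiv.Perm.sign_inv]
      _ = (∑ σ : Equiv.Perm (Fin p), ((Equiv.Perm.sign σ : ℤ) : R) * ∏ i, c (σ i) (E s i)) •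
            g (E s) := by rw [Finset.sum_smul]
      _ = (Matrix.det (Matrix.of fun r t => c r (E s t))) • g (E s) := by
          rw [Matrix.det_apply']
          rfl
  have hbij : ∑ m ∈ univ.filter (fun m : Fin p → Fin n => Function.Injective m),
      (∏ r, c r (m r)) • g m
      = ∑ x : {s : Finset (Fin n) // s.card = p} × Equiv.Perm (Fin p),
          (∏ r, c r (E x.1 (x.2 r))) • g (E x.1 ∘ x.2) := by
    symm
    refine Finset.sum_bij (fun x _ => E x.1 ∘ x.2) ?_ ?_ ?_ ?_
    · intro x _
      simp only [mem_filter, mem_univ, true_and]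
      exact (x.1.1.orderEmbOfFin x.1.2).injective.comp x.2.injective
    · intro x _ y _ hxy
      obtain ⟨s₁, σ₁⟩ := x
      obtain ⟨s₂, σ₂⟩ := y
      replace hxy : E s₁ ∘ ⇑σ₁ = E s₂ ∘ ⇑σ₂ := hxy
      have hrange : ∀ (s : {s : Finset (Fin n) // s.card = p}) (σ : Equiv.Perm (Fin p)),
          Set.range (E s ∘ σ) = ↑s.1 := by
        intro s σ
        rw [Set.range_comp, Equiv.range_eq_univ, Set.image_univ]
        exact s.1.range_orderEmbOfFin s.2
      have hs : s₁ = s₂ := by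
        apply Subtype.ext
        apply Finset.coe_injective
        rw [← hrange s₁ σ₁, ← hrange s₂ σ₂, hxy]
      subst hs
      have hσ : σ₁ = σ₂ :=
        Equiv.ext fun t => (s₁.1.orderEmbOfFin s₁.2).injective (congrFun hxy t)
      rw [hσ]
    · intro m hm
      rw [mem_filter] at hm
      obtain ⟨-, hminj⟩ := hm
      have hcard : (univ.image m).card = p := by
        rw [Finset.card_image_of_injective _ hminj, card_univ, Fintype.card_fin]
      set s : Finset (Fin n) := univ.image m with hsdef
      have hmem : ∀ t, m t ∈ s := fun t => Finset.mem_image.mpr ⟨t, mem_univ t, rfl⟩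
      let φ : Fin p → Fin p := fun t => (s.orderIsoOfFin hcard).symm ⟨m t, hmem t⟩
      have hφ : ∀ t, s.orderEmbOfFin hcard (φ t) = m t := by
        intro t
        have := (s.orderIsoOfFin hcard).apply_symm_apply ⟨m t, hmem t⟩
        rw [← Finset.coe_orderIsoOfFin_apply]
        exact congrArg Subtype.val this
      have hφinj : Function.Injective φ := by
        intro t t' h
        exact hminj (by rw [← hφ t, ← hφ t', h])
      refine ⟨(⟨s, hcard⟩, Equiv.ofBijective φ (Finite.injective_iff_bijective.mp hφinj)),
        mem_univ _, ?_⟩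
      funext t
      exact hφ t
    · intro x _
      rfl
  calc ∑ m : Fin p → Fin n, (∏ r, c r (m r)) • g m
      = ∑ m ∈ univ.filter (fun m : Fin p → Fin n => Function.Injective m),
          (∏ r, c r (m r)) • g m
        + ∑ m ∈ univ.filter (fun m : Fin p → Fin n => ¬ Function.Injective m),
          (∏ r, c r (m r)) • g m :=
        (Finset.sum_filter_add_sum_filter_not univ _ _).symm
    _ = ∑ m ∈ univ.filter (fun m : Fin p → Fin n => Function.Injective m),
          (∏ r, c r (m r)) • g m := by rw [h0, add_zero]
    _ = ∑ x : {s : Finset (Fin n) // s.card = p} × Equiv.Perm (Fin p),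
          (∏ r, c r (E x.1 (x.2 r))) • g (E x.1 ∘ x.2) := hbij
    _ = ∑ s : {s : Finset (Fin n) // s.card = p}, ∑ σ : Equiv.Perm (Fin p),
          (∏ r, c r (E s (σ r))) • g (E s ∘ σ) := Fintype.sum_prod_type _
    _ = ∑ s : {s : Finset (Fin n) // s.card = p},
          (Matrix.det (Matrix.of fun r t => c r (E s t))) • g (E s) :=
        Finset.sum_congr rfl fun s _ => key s

/-- Expansion of a function that is a "derivation with dual basis" in every slot. -/
private lemma expand_slots {R : Type*} [CommRing R] {n : ℕ} (x : Fin n → R) (w : Fin n → R → R) :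
    ∀ {p : ℕ} (F : (Fin p → R) → R),
      (∀ (a : Fin p → R) (r : Fin p), F a = ∑ i, w i (a r) * F (Function.update a r (x i))) →
      ∀ a, F a = ∑ m : Fin p → Fin n, (∏ r, w (m r) (a r)) * F (x ∘ m) := by
  intro p
  induction p with
  | zero =>
    intro F _ a
    rw [Fintype.sum_unique]
    simp only [Fin.prod_univ_zero, one_mul]
    exact congrArg F (Subsingleton.elim _ _)
  | succ p ih =>
    intro F hF a
    have hupd : ∀ i, Function.update a 0 (x i) = Fin.cons (x i) (Fin.tail a) := by
      intro i
      conv_lhs => rw [← Fin.cons_self_tail a]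
      rw [Fin.update_cons_zero]
    have hstep : F a = ∑ i, w i (a 0) * F (Fin.cons (x i) (Fin.tail a)) := by
      have h1 := hF a 0
      simpa only [hupd] using h1
    have hIH : ∀ i, F (Fin.cons (x i) (Fin.tail a))
        = ∑ m' : Fin p → Fin n, (∏ r, w (m' r) (Fin.tail a r)) * F (Fin.cons (x i) (x ∘ m')) := by
      intro i
      exact ih (fun b => F (Fin.cons (x i) b)) (fun b r => by
        simpa only [Fin.cons_succ, ← Fin.cons_update] using hF (Fin.cons (x i) b) r.succ)
        (Fin.tail a)
    have hA : F a = ∑ i, ∑ m' : Fin p → Fin n,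
        w i (a 0) * ((∏ r, w (m' r) (Fin.tail a r)) * F (Fin.cons (x i) (x ∘ m'))) := by
      rw [hstep]
      exact sum_congr rfl fun i _ => by rw [hIH i, Finset.mul_sum]
    have hp : ∑ z : Fin n × (Fin p → Fin n),
        w z.1 (a 0) * ((∏ r, w (z.2 r) (Fin.tail a r)) * F (Fin.cons (x z.1) (x ∘ z.2)))
        = ∑ i, ∑ m' : Fin p → Fin n,
            w i (a 0) * ((∏ r, w (m' r) (Fin.tail a r)) * F (Fin.cons (x i) (x ∘ m'))) :=
      Fintype.sum_prod_type _
    rw [hA, ← hp]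
    apply Fintype.sum_equiv (Fin.consEquiv (fun _ => Fin n))
    rintro ⟨i, m'⟩
    have hc : (Fin.consEquiv fun _ => Fin n) (i, m') = Fin.cons i m' := rfl
    rw [hc, Fin.comp_cons, Fin.prod_univ_succ]
    simp only [Fin.cons_zero, Fin.cons_succ, mul_assoc]
    rfl

variable {k R : Type*} [CommRing k] [CommRing R] [Algebra k R] {p : ℕ}

/-- The determinant of a matrix of derivations is a multiderivation. -/
private lemma isMultiDeriv_det (ζ : Fin p → Derivation k R R) :
    IsMultiDeriv k p (fun a => Matrix.det (Matrix.of fun i j => ζ i (a j))) := by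
  classical
  have hupd : ∀ (a : Fin p → R) (t : Fin p) (c : R),
      (Matrix.of fun i j => ζ i (Function.update a t c j))
        = Matrix.updateCol (Matrix.of fun i j => ζ i (a j)) t (fun i => ζ i c) := by
    intro a t c
    ext i j
    simp only [Matrix.of_apply, Matrix.updateCol_apply, Function.update_apply]
    split <;> rfl
  refine ⟨?_, ?_, ?_, ?_⟩
  · intro a t u v
    simp only [hupd]
    have : (fun i => ζ i (u + v)) = (fun i => ζ i u) + (fun i => ζ i v) := by
      funext i; simp [map_add]
    rw [this, Matrix.det_updateCol_add]
  · intro a t c u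
    simp only [hupd]
    have : (fun i => ζ i (c • u)) = (algebraMap k R c) • (fun i => ζ i u) := by
      funext i
      simp [map_smul, Algebra.smul_def]
    rw [this, Matrix.det_updateCol_smul, Algebra.smul_def]
  · intro a i j hij hv
    exact Matrix.det_zero_of_column_eq hij (fun t => by simp [hv])
  · intro a t u v
    simp only [hupd, smul_eq_mul]
    have hcol : (fun i => ζ i (u * v)) = u • (fun i => ζ i v) + v • (fun i => ζ i u) := by
      funext i; simp [Derivation.leibniz, smul_eq_mul]
    rw [hcol, Matrix.det_updateCol_add, Matrix.det_updateCol_smul,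
      Matrix.det_updateCol_smul]

private lemma isMultiDeriv_sum {ι : Type*} (t : Finset ι) (G : ι → (Fin p → R) → R)
    (h : ∀ i ∈ t, IsMultiDeriv k p (G i)) :
    IsMultiDeriv k p (fun a => ∑ i ∈ t, G i a) := by
  refine ⟨?_, ?_, ?_, ?_⟩ <;> dsimp only
  · intro a r u v
    rw [← Finset.sum_add_distrib]
    exact Finset.sum_congr rfl fun i hi => (h i hi).1 a r u v
  · intro a r c u
    rw [Finset.smul_sum]
    exact Finset.sum_congr rfl fun i hi => (h i hi).2.1 a r c u
  · intro a i j hij hv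
    exact Finset.sum_eq_zero fun i hi => (h i hi).2.2.1 a _ _ hij hv
  · intro a r u v
    rw [Finset.smul_sum, Finset.smul_sum, ← Finset.sum_add_distrib]
    exact Finset.sum_congr rfl fun i hi => (h i hi).2.2.2 a r u v

private lemma isMultiDeriv_const_mul (c : R) (G : (Fin p → R) → R)
    (h : IsMultiDeriv k p G) : IsMultiDeriv k p (fun a => c * G a) := by
  refine ⟨?_, ?_, ?_, ?_⟩ <;> dsimp only
  · intro a r u v
    rw [h.1 a r u v, mul_add]
  · intro a r d u
    rw [h.2.1 a r d u, mul_smul_comm]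
  · intro a i j hij hv
    rw [h.2.2.1 a i j hij hv, mul_zero]
  · intro a r u v
    rw [h.2.2.2 a r u v]
    simp only [smul_eq_mul]
    ring

/-- Package a multiderivation as a `k`-alternating map. -/
private def IsMultiDeriv.altMap {F : (Fin p → R) → R} (hF : IsMultiDeriv k p F) :
    R [⋀^Fin p]→ₗ[k] R where
  toFun := F
  map_update_add' := by
    intro inst a i u v
    rw [Subsingleton.elim inst (instDecidableEqFin p)]
    exact hF.1 a i u v
  map_update_smul' := by
    intro inst a i c u
    rw [Subsingleton.elim inst (instDecidableEqFin p)]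
    exact hF.2.1 a i c u
  map_eq_zero_of_eq' := fun v i j h hij => hF.2.2.1 v i j hij h

end Aux

/-- If `Ω¹(R)` is a finitely generated projective `R`-module, then the
`R`-linear map `α : Λ^p Der_k(R) → {maps R^p → R}` determined by
`α(ξ₁ ∧ ⋯ ∧ ξ_p)(a₁, …, a_p) = det (ξ_i (a_j))` is injective with image exactly the set
of `p`-fold multiderivations `𝔛^p(R)`. -/
theorem statement2 (k R : Type*) [CommRing k] [CommRing R] [Algebra k R]
    [Module.Finite R (Ω[R⁄k])] [Module.Projective R (Ω[R⁄k])] (p : ℕ)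
    (α : ↥(⋀[R]^p (Derivation k R R)) →ₗ[R] ((Fin p → R) → R))
    (hα : ∀ (ξ : Fin p → Derivation k R R) (a : Fin p → R),
      α (wedge p ξ) a = Matrix.det (Matrix.of fun i j => ξ i (a j))) :
    Function.Injective α ∧ Set.range α = {F | IsMultiDeriv k p F} := by
  classical
  obtain ⟨n, v, hvmem, hvspan⟩ := exists_fin_subset_span
    (Set.range (KaehlerDifferential.D k R)) (KaehlerDifferential.span_range_derivation k R)
  choose x hx using hvmem
  set D := KaehlerDifferential.D k R with hD
  set π : (Fin n → R) →ₗ[R] Ω[R⁄k] := Fintype.linearCombination R v with hπ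
  have hπs : Function.Surjective π := by
    rw [← LinearMap.range_eq_top, hπ, Fintype.range_linearCombination]
    exact hvspan
  obtain ⟨f, hf⟩ := Module.projective_lifting_property π LinearMap.id hπs
  have hfapp : ∀ ω : Ω[R⁄k], ∑ i, f ω i • v i = ω := by
    intro ω
    have h1 := LinearMap.congr_fun hf ω
    simpa [hπ, Fintype.linearCombination_apply] using h1
  set ξ : Fin n → Derivation k R R := fun i =>
    ((LinearMap.proj i : (Fin n → R) →ₗ[R] R) ∘ₗ f).compDer D with hξdef
  have hξ : ∀ i a, ξ i a = f (D a) i := fun i a => rfl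
  have hkey : ∀ (δ : Derivation k R R) (a : R), δ a = ∑ i, ξ i a * δ (x i) := by
    intro δ a
    have h1 : δ.liftKaehlerDifferential (D a) = δ a :=
      Derivation.liftKaehlerDifferential_comp_D δ a
    rw [← h1, ← hfapp (D a), map_sum]
    refine Finset.sum_congr rfl fun i _ => ?_
    rw [map_smul, smul_eq_mul, ← hx i, Derivation.liftKaehlerDifferential_comp_D]
    rfl
  set W : (Derivation k R R) [⋀^Fin p]→ₗ[R] (⋀[R]^p (Derivation k R R)) :=
    (ExteriorAlgebra.ιMulti R p).codRestrict (⋀[R]^p (Derivation k R R))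
      (fun u => ExteriorAlgebra.ιMulti_range R p (Set.mem_range_self u)) with hWdef
  have hW : ∀ u, W u = wedge p u := fun u => rfl
  have hderiv_expand : ∀ ζ : Derivation k R R, ζ = ∑ i, ζ (x i) • ξ i := by
    intro ζ
    ext a
    rw [hkey ζ a]
    have h2 : (∑ i, ζ (x i) • ξ i) a = ∑ i, ζ (x i) * ξ i a := by
      induction (Finset.univ : Finset (Fin n)) using Finset.induction_on with
      | empty => simp
      | insert _ _ hnot ih =>
        rw [Finset.sum_insert hnot, Finset.sum_insert hnot, Derivation.add_apply,
          Derivation.smul_apply, ih, smul_eq_mul]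
    rw [h2]
    exact Finset.sum_congr rfl fun i _ => mul_comm _ _
  set E : {s : Finset (Fin n) // s.card = p} → Fin p → Fin n :=
    fun s t => s.1.orderEmbOfFin s.2 t with hE
  set wξ : {s : Finset (Fin n) // s.card = p} → ⋀[R]^p (Derivation k R R) :=
    fun s => wedge p (fun t => ξ (E s t)) with hwξ
  -- expansion of wedges
  have hwedge : ∀ ξv : Fin p → Derivation k R R,
      wedge p ξv = ∑ s : {s : Finset (Fin n) // s.card = p},
        α (wedge p ξv) (fun t => x (E s t)) • wξ s := by
    intro ξv
    have h1 : wedge p ξv = W (fun r => ∑ i, ξv r (x i) • ξ i) := by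
      rw [hW]
      congr 1
      funext r
      exact hderiv_expand (ξv r)
    have h2 : W (fun r => ∑ i, ξv r (x i) • ξ i)
        = ∑ m : Fin p → Fin n, (∏ r, ξv r (x (m r))) • W (fun t => ξ (m t)) := by
      rw [show (fun r => ∑ i, ξv r (x i) • ξ i) = (fun r => ∑ i, (fun r' i' => ξv r' (x i') • ξ i') r i) from rfl]
      rw [← AlternatingMap.coe_multilinearMap, W.toMultilinearMap.map_sum]
      refine Finset.sum_congr rfl fun m _ => ?_
      exact W.toMultilinearMap.map_smul_univ (fun r => ξv r (x (m r))) (fun t => ξ (m t))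
    have h3 := sum_alternating_grouping (c := fun r i => ξv r (x i))
      (g := fun m => W (fun t => ξ (m t)))
      (fun m i j hij hm => W.map_eq_zero_of_eq _ (by rw [hm]) hij)
      (fun m σ => W.map_perm (fun t => ξ (m t)) σ)
    conv_lhs => rw [h1, h2, h3]
    refine Finset.sum_congr rfl fun s _ => ?_
    dsimp only
    rw [hα ξv (fun t => x (E s t))]
    rfl
  -- every element is determined by its `α`-values at the points `x ∘ E s`
  have hrepr : ∀ ω : ⋀[R]^p (Derivation k R R),
      ω = ∑ s : {s : Finset (Fin n) // s.card = p},
        α ω (fun t => x (E s t)) • wξ s := by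
    rintro ⟨y, hy⟩
    have hy' : y ∈ Submodule.span R
        (Set.range (ExteriorAlgebra.ιMulti R p (M := Derivation k R R))) := by
      rw [ExteriorAlgebra.ιMulti_span_fixedDegree]
      exact hy
    refine Submodule.span_induction
      (p := fun z _ => ∀ hz' : z ∈ ⋀[R]^p (Derivation k R R),
        (⟨z, hz'⟩ : ⋀[R]^p (Derivation k R R))
          = ∑ s : {s : Finset (Fin n) // s.card = p},
              α ⟨z, hz'⟩ (fun t => x (E s t)) • wξ s)
      ?_ ?_ ?_ ?_ hy' hy
    · rintro _ ⟨u, rfl⟩ hz'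
      have : (⟨ExteriorAlgebra.ιMulti R p u, hz'⟩ : ⋀[R]^p (Derivation k R R)) = wedge p u :=
        Subtype.ext rfl
      rw [this]
      exact hwedge u
    · intro hz'
      have h0 : (⟨0, hz'⟩ : ⋀[R]^p (Derivation k R R)) = 0 := Subtype.ext rfl
      rw [h0]
      simp only [map_zero, Pi.zero_apply, zero_smul, Finset.sum_const_zero]
    · intro y₁ y₂ hy₁ hy₂ ih₁ ih₂ hz'
      have hm₁ : y₁ ∈ ⋀[R]^p (Derivation k R R) := by
        rw [← ExteriorAlgebra.ιMulti_span_fixedDegree]; exact hy₁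
      have hm₂ : y₂ ∈ ⋀[R]^p (Derivation k R R) := by
        rw [← ExteriorAlgebra.ιMulti_span_fixedDegree]; exact hy₂
      have hsum : (⟨y₁ + y₂, hz'⟩ : ⋀[R]^p (Derivation k R R))
          = ⟨y₁, hm₁⟩ + ⟨y₂, hm₂⟩ := Subtype.ext rfl
      rw [hsum]
      conv_lhs => rw [ih₁ hm₁, ih₂ hm₂]
      rw [← Finset.sum_add_distrib]
      refine Finset.sum_congr rfl fun s _ => ?_
      rw [← add_smul, ← Pi.add_apply (α ⟨y₁, hm₁⟩) (α ⟨y₂, hm₂⟩), ← map_add]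
    · intro r y₁ hy₁ ih hz'
      have hm₁ : y₁ ∈ ⋀[R]^p (Derivation k R R) := by
        rw [← ExteriorAlgebra.ιMulti_span_fixedDegree]; exact hy₁
      have hsm : (⟨r • y₁, hz'⟩ : ⋀[R]^p (Derivation k R R)) = r • ⟨y₁, hm₁⟩ :=
        Subtype.ext rfl
      rw [hsm]
      conv_lhs => rw [ih hm₁]
      rw [Finset.smul_sum]
      refine Finset.sum_congr rfl fun s _ => ?_
      rw [smul_smul, map_smul, Pi.smul_apply, smul_eq_mul]
  constructor
  · intro ω₁ ω₂ h
    calc ω₁ = ∑ s : {s : Finset (Fin n) // s.card = p},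
          α ω₁ (fun t => x (E s t)) • wξ s := hrepr ω₁
      _ = ∑ s : {s : Finset (Fin n) // s.card = p},
          α ω₂ (fun t => x (E s t)) • wξ s := by rw [h]
      _ = ω₂ := (hrepr ω₂).symm
  · ext F
    simp only [Set.mem_range, Set.mem_setOf_eq]
    constructor
    · rintro ⟨ω, rfl⟩
      have hfun : α ω = fun a => ∑ s : {s : Finset (Fin n) // s.card = p},
          α ω (fun t => x (E s t)) * Matrix.det (Matrix.of fun i j => ξ (E s i) (a j)) := by
        conv_lhs => rw [hrepr ω]
        rw [map_sum]
        funext a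
        rw [Finset.sum_apply]
        refine Finset.sum_congr rfl fun s _ => ?_
        rw [map_smul, Pi.smul_apply, smul_eq_mul, hα]
      rw [hfun]
      exact isMultiDeriv_sum _ _ fun s _ => isMultiDeriv_const_mul _ _ (isMultiDeriv_det _)
    · intro hF
      refine ⟨∑ s : {s : Finset (Fin n) // s.card = p},
        F (fun t => x (E s t)) • wξ s, ?_⟩
      have hslot : ∀ (a : Fin p → R) (r : Fin p),
          F a = ∑ i, ξ i (a r) * F (Function.update a r (x i)) := by
        intro a r
        set δ : Derivation k R R := Derivation.mk'
          { toFun := fun b => F (Function.update a r b)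
            map_add' := fun u w => hF.1 a r u w
            map_smul' := fun c u => by simpa using hF.2.1 a r c u }
          (fun u w => hF.2.2.2 a r u w) with hδ
        have hδa : ∀ b, δ b = F (Function.update a r b) := fun b => rfl
        have h1 := hkey δ (a r)
        rw [hδa, Function.update_eq_self] at h1
        rw [h1]
        refine Finset.sum_congr rfl fun i _ => ?_
        rw [hδa]
      have hexp := expand_slots x (fun i b => ξ i b) F hslot
      funext a
      have hgrp := sum_alternating_grouping (R := R) (N := R)
        (c := fun r i => ξ i (a r)) (g := fun m => F (fun t => x (m t)))
        (fun m i j hij hm => hF.2.2.1 _ i j hij (by rw [hm]))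
        (fun m σ => hF.altMap.map_perm (fun t => x (m t)) σ)
      have hFa : F a = ∑ s : {s : Finset (Fin n) // s.card = p},
          (Matrix.det (Matrix.of fun r t => ξ (E s t) (a r))) • F (fun t => x (E s t)) := by
        rw [hexp a]
        rw [show (∑ m : Fin p → Fin n, (∏ r, ξ (m r) (a r)) * F (x ∘ m))
            = ∑ m : Fin p → Fin n, (∏ r, (fun r' i' => ξ i' (a r')) r (m r)) • F (fun t => x (m t))
          from Finset.sum_congr rfl fun m _ => by rw [smul_eq_mul]; rfl]
        exact hgrp
      have hαval : α (∑ s : {s : Finset (Fin n) // s.card = p},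
          F (fun t => x (E s t)) • wξ s) a
          = ∑ s : {s : Finset (Fin n) // s.card = p},
              F (fun t => x (E s t)) * Matrix.det (Matrix.of fun i j => ξ (E s i) (a j)) := by
        rw [map_sum, Finset.sum_apply]
        refine Finset.sum_congr rfl fun s _ => ?_
        rw [map_smul, Pi.smul_apply, smul_eq_mul, hα]
      rw [hαval, hFa]
      refine Finset.sum_congr rfl fun s _ => ?_
      rw [smul_eq_mul, mul_comm]
      congr 1
      rw [show (Matrix.of fun r t => ξ (E s t) (a r))
          = (Matrix.of fun i j => ξ (E s i) (a j)).transpose from rfl,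
        Matrix.det_transpose]
end
end

section
/- Let R be a commutative k-algebra such that Ω¹(R) is finitely generated projective with dual basis x_1,…,x_r ∈ Ω¹(R), f_1,…,f_r ∈ Hom_R(Ω¹(R),R), and assume Λ^{n+1}Ω¹(R) = 0. Then for every η ∈ Λ^nΩ¹(R), every increasing tuple 1 ≤ I_1 < … < I_n ≤ r and every 1 ≤ s ≤ r, the identity ⟨f_{I_1}∧…∧f_{I_n}, η⟩·f_s = Σ_{j=1}^n ⟨f_{I_1}∧…∧f_{I_{j−1}}∧f_s∧f_{I_{j+1}}∧…∧f_{I_n}, η⟩·f_{I_j} holds in Hom_R(Ω¹(R),R). -/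
noncomputable section

open ExteriorAlgebra in
lemma det_pairing_zero' {R M : Type*} [CommRing R] [AddCommGroup M] [Module R M]
    (m : ℕ) (h : ⋀[R]^m M = ⊥) (g : Fin m → (M →ₗ[R] R)) (v : Fin m → M) :
    Matrix.det (Matrix.of fun i j => g i (v j)) = 0 := by
  have hv : ιMulti R m v = 0 := by
    have hmem := ιMulti_range R m (M := M) (Set.mem_range_self v)
    rw [h] at hmem
    simpa using hmem
  have hlift := congrArg (liftAlternating (R := R) (M := M) (N := R)
      (Function.update 0 m ((Matrix.detRowAlternating).compLinearMap (LinearMap.pi g)))) hv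
  rw [liftAlternating_apply_ιMulti, map_zero, Function.update_self] at hlift
  rw [← Matrix.det_transpose]
  exact hlift

lemma wedge_span' {R M : Type*} [CommRing R] [AddCommGroup M] [Module R M] (n : ℕ) :
    Submodule.span R (Set.range (wedge (R := R) (M := M) n)) = ⊤ := by
  apply Submodule.map_injective_of_injective (Submodule.injective_subtype (⋀[R]^n M))
  rw [Submodule.map_span, Submodule.map_top, Submodule.range_subtype]
  have himg : ((⋀[R]^n M).subtype '' Set.range (wedge (R := R) (M := M) n))
      = Set.range (ExteriorAlgebra.ιMulti R n (M := M)) := by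
    ext z
    constructor
    · rintro ⟨-, ⟨v, rfl⟩, rfl⟩; exact ⟨v, rfl⟩
    · rintro ⟨v, rfl⟩; exact ⟨wedge n v, ⟨v, rfl⟩, rfl⟩
  rw [himg, ExteriorAlgebra.ιMulti_span_fixedDegree]

/-- Let `Ω¹(R)` be finitely generated projective with dual basis
`x₁, …, x_r`, `f₁, …, f_r`, and assume `Λ^{n+1} Ω¹(R) = 0`. Then for every `η ∈ Λ^n Ω¹(R)`,
every increasing tuple `I` and every `s`,
`⟨f_{I₁} ∧ ⋯ ∧ f_{I_n}, η⟩ • f_s = Σ_j ⟨f_{I₁} ∧ ⋯ f_s ⋯ ∧ f_{I_n}, η⟩ • f_{I_j}`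
holds in `Hom_R(Ω¹(R), R)`, where `⟨g₁ ∧ ⋯ ∧ g_n, η⟩` denotes the determinant pairing. -/
theorem statement5 (k R : Type*) [CommRing k] [CommRing R] [Algebra k R]
    (r : ℕ) (x : Fin r → Ω[R⁄k]) (f : Fin r → (Ω[R⁄k] →ₗ[R] R))
    (hdual : ∀ y : Ω[R⁄k], ∑ i : Fin r, f i y • x i = y)
    (n : ℕ) (hvanish : ⋀[R]^(n + 1) (Ω[R⁄k]) = ⊥)
    -- the determinant pairing `⟨g₁ ∧ ⋯ ∧ g_n, -⟩ ∈ Hom_R(Λ^n Ω¹(R), R)`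
    (Φ : (Fin n → (Ω[R⁄k] →ₗ[R] R)) → (↥(⋀[R]^n (Ω[R⁄k])) →ₗ[R] R))
    (hΦ : ∀ (g : Fin n → (Ω[R⁄k] →ₗ[R] R)) (ω : Fin n → Ω[R⁄k]),
      Φ g (wedge n ω) = Matrix.det (Matrix.of fun i j => g i (ω j))) :
    ∀ (η : ↥(⋀[R]^n (Ω[R⁄k]))) (I : Fin n → Fin r), StrictMono I → ∀ s : Fin r,
      Φ (fun t => f (I t)) η • f s =
        ∑ j : Fin n, Φ (Function.update (fun t => f (I t)) j (f s)) η • f (I j) := by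
  intro η I _ s
  set M := Ω[R⁄k]
  set fI : Fin n → (M →ₗ[R] R) := fun t => f (I t) with hfI
  set F₁ : ↥(⋀[R]^n M) →ₗ[R] (M →ₗ[R] R) := (Φ fI).smulRight (f s) with hF₁
  set F₂ : ↥(⋀[R]^n M) →ₗ[R] (M →ₗ[R] R) :=
    ∑ j : Fin n, (Φ (Function.update fI j (f s))).smulRight (f (I j)) with hF₂
  suffices hFF : F₁ = F₂ by
    have := DFunLike.congr_fun hFF η
    simpa [hF₁, hF₂, LinearMap.sum_apply] using this
  apply LinearMap.ext_on (wedge_span' n)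
  rintro _ ⟨ω, rfl⟩
  apply LinearMap.ext
  intro y
  simp only [hF₁, hF₂, LinearMap.smulRight_apply, LinearMap.sum_apply, LinearMap.smul_apply,
    smul_eq_mul, hΦ]
  set g : Fin (n + 1) → (M →ₗ[R] R) := Fin.cons (f s) fI with hg
  set v : Fin (n + 1) → M := Fin.cons y ω with hv
  have hdet := det_pairing_zero' (n + 1) hvanish g v
  rw [Matrix.det_succ_column_zero, Fin.sum_univ_succ] at hdet
  have h0 : ((Matrix.of fun i j => g i (v j)).submatrix (Fin.succAbove 0) Fin.succ)
      = Matrix.of fun a b => fI a (ω b) := by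
    ext a b
    simp [hg, hv, Matrix.submatrix, Fin.succAbove_zero]
  have hminor : ∀ j : Fin n,
      Matrix.det ((Matrix.of fun i j' => g i (v j')).submatrix (Fin.succAbove j.succ) Fin.succ)
        = (-1 : R) ^ (j : ℕ)
          * Matrix.det (Matrix.of fun a b => Function.update fI j (f s) a (ω b)) := by
    intro j
    have hrow : ∀ b : Fin n,
        g (j.succ.succAbove (j.cycleRange b)) = Function.update fI j (f s) b := by
      intro b
      rw [Fin.succAbove_cycleRange]
      rcases eq_or_ne b j with rfl | hb
      · rw [Equiv.swap_apply_right]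
        simp [hg]
      · rw [Equiv.swap_apply_of_ne_of_ne (Fin.succ_ne_zero b)
          (fun hc => hb (Fin.succ_injective _ hc))]
        simp [hg, Function.update_of_ne hb]
    have hmat : ((Matrix.of fun i j' => g i (v j')).submatrix (Fin.succAbove j.succ) Fin.succ)
        = (Matrix.of fun a b => Function.update fI j (f s) a (ω b)).submatrix
            (⇑(j.cycleRange⁻¹)) id := by
      ext a b
      have hr := hrow ((j.cycleRange)⁻¹ a)
      rw [show j.cycleRange ((j.cycleRange)⁻¹ a) = a from Equiv.apply_symm_apply _ _] at hr
      simp only [Matrix.submatrix_apply, Matrix.of_apply, id_eq, hv, Fin.cons_succ]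
      rw [hr]
    rw [hmat, Matrix.det_permute]
    have hsign : ((Equiv.Perm.sign (j.cycleRange)⁻¹ : ℤ) : R) = (-1) ^ (j : ℕ) := by
      rw [map_inv, Fin.sign_cycleRange]
      simp
    rw [hsign]
  rw [h0] at hdet
  have hterm : ∀ j : Fin n,
      (-1 : R) ^ ((j.succ : Fin (n+1)) : ℕ) * (Matrix.of fun i j' => g i (v j')) j.succ 0
          * Matrix.det ((Matrix.of fun i j' => g i (v j')).submatrix (Fin.succAbove j.succ) Fin.succ)
        = -(Matrix.det (Matrix.of fun a b => Function.update fI j (f s) a (ω b)) * f (I j) y) := by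
    intro j
    rw [hminor j]
    have h2 : (-1 : R) ^ (j : ℕ) * (-1 : R) ^ (j : ℕ) = 1 := by
      rw [← mul_pow]; norm_num
    simp only [Matrix.of_apply, hg, hv, Fin.cons_succ, Fin.cons_zero, Fin.val_succ]
    linear_combination (-(f (I j) y)
      * Matrix.det (Matrix.of fun a b => Function.update fI j (f s) a (ω b))) * h2
  rw [Finset.sum_congr rfl (fun j _ => hterm j)] at hdet
  simp only [hg, hv, Matrix.of_apply, Fin.cons_zero, Fin.val_zero, pow_zero, one_mul] at hdet
  rw [Finset.sum_neg_distrib] at hdet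
  linear_combination hdet
end
end

section
/- Let R be a commutative k-algebra with Λ^{n+1}Ω¹(R) = 0, and suppose Ω¹(R) is finitely generated projective with dual basis x_1,…,x_r ∈ Ω¹(R), f_1,…,f_r ∈ Hom_R(Ω¹(R),R). Then for every F ∈ Hom_R(Ω¹(R),R), every a ∈ R and every increasing tuple 1 ≤ I_1 < … < I_n ≤ r: F(da)·(x_{I_1}∧…∧x_{I_n}) = Σ_{j=1}^n (−1)^{j−1} F(x_{I_j})·(da ∧ x_{I_1}∧…∧x_{I_{j−1}}∧x_{I_{j+1}}∧…∧x_{I_n}) in Λ^nΩ¹(R). -/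
noncomputable section

open ExteriorAlgebra CliffordAlgebra

/-- Contraction of an `(n+1)`-fold wedge by a dual vector. -/
lemma contract_ιMulti {R M : Type*} [CommRing R] [AddCommGroup M] [Module R M]
    (d : Module.Dual R M) : ∀ (n : ℕ) (v : Fin (n + 1) → M),
    contractLeft (Q := (0 : QuadraticForm R M)) d (ιMulti R (n + 1) v) =
      ∑ j : Fin (n + 1), (-1 : ℤ) ^ (j : ℕ) •
        (d (v j) • ιMulti R n fun l => v (j.succAbove l)) := by
  intro n
  induction n with
  | zero =>
    intro v
    rw [ιMulti_succ_apply, ιMulti_zero_apply, mul_one, contractLeft_ι]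
    simp [Algebra.algebraMap_eq_smul_one, ιMulti_zero_apply]
  | succ n ih =>
    intro v
    have h1 : ιMulti R (n + 2) v = ι R (v 0) * ιMulti R (n + 1) (fun i => v i.succ) := by
      rw [ιMulti_succ_apply]; rfl
    have hL : contractLeft (Q := (0 : QuadraticForm R M)) d (ιMulti R (n + 2) v) =
        d (v 0) • ιMulti R (n + 1) (fun i => v i.succ) -
          ∑ j : Fin (n + 1), ι R (v 0) *
            ((-1 : ℤ) ^ (j : ℕ) • (d (v j.succ) • ιMulti R n fun l => v (j.succAbove l).succ)) := by
      rw [h1, contractLeft_ι_mul, ih fun i => v i.succ, Finset.mul_sum]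
    rw [hL]
    conv_rhs => rw [Fin.sum_univ_succ]
    rw [sub_eq_add_neg, ← Finset.sum_neg_distrib]
    congr 1
    · simp [Fin.zero_succAbove]
    · refine Finset.sum_congr rfl fun j _ => ?_
      have h2 : ιMulti R (n + 1) (fun l => v (j.succ.succAbove l)) =
          ι R (v 0) * ιMulti R n (fun l => v (j.succAbove l).succ) := by
        rw [ιMulti_succ_apply]
        simp [Matrix.vecTail, Function.comp_def, Fin.succ_succAbove_succ]
      rw [h2]
      rw [show ((j.succ : Fin (n + 2)) : ℕ) = (j : ℕ) + 1 from rfl, pow_succ]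
      simp only [mul_smul_comm, smul_smul]
      rw [← neg_smul]
      congr 1
      ring

/-- Let `Λ^{n+1} Ω¹(R) = 0` (here with `n = m + 1`), and `Ω¹(R)` finitely
generated projective with dual basis `x₁, …, x_r`, `f₁, …, f_r`. Then for every
`F ∈ Hom_R(Ω¹(R), R)`, every `a ∈ R` and every increasing tuple `I`:
`F(da) • (x_{I₁} ∧ ⋯ ∧ x_{I_n}) =
  Σ_j (−1)^{j−1} F(x_{I_j}) • (da ∧ x_{I₁} ∧ ⋯ (omit x_{I_j}) ⋯ ∧ x_{I_n})`. -/
theorem statement6 (k R : Type*) [CommRing k] [CommRing R] [Algebra k R]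
    (m : ℕ) (hvanish : ⋀[R]^(m + 2) (Ω[R⁄k]) = ⊥)
    (r : ℕ) (x : Fin r → Ω[R⁄k]) (f : Fin r → (Ω[R⁄k] →ₗ[R] R))
    (hdual : ∀ y : Ω[R⁄k], ∑ i : Fin r, f i y • x i = y) :
    ∀ (F : Ω[R⁄k] →ₗ[R] R) (a : R) (I : Fin (m + 1) → Fin r), StrictMono I →
      F (KaehlerDifferential.D k R a) • wedge (R := R) (m + 1) (fun i => x (I i)) =
        ∑ j : Fin (m + 1), (-1 : ℤ) ^ (j : ℕ) •
          (F (x (I j)) •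
            wedge (R := R) (m + 1)
              (Fin.cons (KaehlerDifferential.D k R a) fun l : Fin m => x (I (j.succAbove l)))) := by
  intro F a I _hI
  set da := KaehlerDifferential.D k R a with hda
  set w : Fin (m + 2) → Ω[R⁄k] := Fin.cons da fun i => x (I i) with hwdef
  have hw : ιMulti R (m + 2) w = 0 := by
    have h := ExteriorAlgebra.ιMulti_range R (m + 2) (M := Ω[R⁄k]) (Set.mem_range_self w)
    rw [hvanish] at h
    simpa using h
  have h0 := contract_ιMulti F (m + 1) w
  rw [hw, map_zero] at h0
  rw [Fin.sum_univ_succ] at h0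
  have hfun : ∀ i : Fin (m + 1),
      (fun l => w ((i.succ).succAbove l)) = Fin.cons da fun l => x (I (i.succAbove l)) := by
    intro i; funext l
    refine Fin.cases ?_ ?_ l
    · simp [hwdef]
    · intro l'; simp [hwdef, Fin.succ_succAbove_succ]
  have h1 : (0 : ExteriorAlgebra R (Ω[R⁄k])) =
      F da • ιMulti R (m + 1) (fun i => x (I i)) +
        ∑ i : Fin (m + 1), (-1 : ℤ) ^ ((i : ℕ) + 1) •
          (F (x (I i)) • ιMulti R (m + 1) (Fin.cons da fun l => x (I (i.succAbove l)))) := by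
    rw [h0]
    congr 1
    · simp [hwdef, Fin.zero_succAbove]
    · exact Finset.sum_congr rfl fun i _ => by rw [hfun i]; simp [hwdef]
  have h2 : F da • ιMulti R (m + 1) (fun i => x (I i)) =
      ∑ i : Fin (m + 1), (-1 : ℤ) ^ (i : ℕ) •
        (F (x (I i)) • ιMulti R (m + 1) (Fin.cons da fun l => x (I (i.succAbove l)))) := by
    have h3 := eq_neg_of_add_eq_zero_left h1.symm
    rw [h3, ← Finset.sum_neg_distrib]
    exact Finset.sum_congr rfl fun i _ => by rw [pow_succ, ← neg_smul]; ring_nf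
  apply Subtype.ext
  push_cast [wedge]
  exact h2
end
end

section
/- Let R be a commutative k-algebra such that Ω¹(R) is finitely generated projective, Λ^{n+1}Ω¹(R) = 0, and Λ^nΩ¹(R) ≅ R as R-modules. Then for every dual basis x_1,…,x_r ∈ Ω¹(R), f_1,…,f_r ∈ Hom_R(Ω¹(R),R) of Ω¹(R), one has Σ_{i=1}^r f_i(x_i) = n·1_R. -/
noncomputable section

open ExteriorAlgebra CliffordAlgebra in
lemma euler_op {R M : Type*} [CommRing R] [AddCommGroup M] [Module R M]
    (r : ℕ) (x : Fin r → M) (f : Fin r → (M →ₗ[R] R))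
    (hdual : ∀ y : M, ∑ i : Fin r, f i y • x i = y) (q : ℕ) :
    ∀ v ∈ (LinearMap.range (ι R : M →ₗ[R] ExteriorAlgebra R M)) ^ q,
      ∑ i : Fin r, ι R (x i) * contractLeft (f i) v = q • v := by
  induction q with
  | zero =>
    intro v hv
    rw [pow_zero] at hv
    obtain ⟨c, rfl⟩ := Submodule.mem_one.mp hv
    simp [contractLeft_algebraMap]
  | succ q ih =>
    intro v hv
    rw [pow_succ'] at hv
    induction hv using Submodule.mul_induction_on' with
    | mem_mul_mem m hm w hw =>
      obtain ⟨a, rfl⟩ := hm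
      have key : ∀ i : Fin r, ι R (x i) * contractLeft (f i) (ι R a * w)
          = f i a • (ι R (x i) * w) + ι R a * (ι R (x i) * contractLeft (f i) w) := by
        intro i
        rw [contractLeft_ι_mul]
        rw [mul_sub, mul_smul_comm]
        rw [← mul_assoc, ← mul_assoc]
        have : (ι R (x i) : ExteriorAlgebra R M) * ι R a = - (ι R a * ι R (x i)) := by
          rw [eq_neg_iff_add_eq_zero, ι_add_mul_swap]
        rw [this, neg_mul, sub_neg_eq_add]
      rw [Finset.sum_congr rfl (fun i _ => key i), Finset.sum_add_distrib]
      have h1 : ∑ i : Fin r, f i a • (ι R (x i) * w) = ι R a * w := by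
        calc ∑ i : Fin r, f i a • (ι R (x i) * w)
            = (∑ i : Fin r, f i a • ι R (x i)) * w := by
              rw [Finset.sum_mul]; simp [smul_mul_assoc]
          _ = ι R (∑ i : Fin r, f i a • x i) * w := by
              rw [map_sum]; simp
          _ = ι R a * w := by rw [hdual]
      have h2 : ∑ i : Fin r, ι R a * (ι R (x i) * contractLeft (f i) w)
          = ι R a * (q • w) := by rw [← Finset.mul_sum, ih w hw]
      rw [h1, h2, mul_smul_comm, succ_nsmul, add_comm]
    | add v₁ h₁ v₂ h₂ ih₁ ih₂ =>
      simp only [map_add, mul_add, Finset.sum_add_distrib, ih₁, ih₂, smul_add]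

/-- If `Ω¹(R)` is finitely generated projective, `Λ^{n+1} Ω¹(R) = 0` and
`Λ^n Ω¹(R) ≅ R` as `R`-modules, then any dual basis `x₁, …, x_r`, `f₁, …, f_r` of `Ω¹(R)`
satisfies `Σ_i f_i(x_i) = n · 1`. -/
theorem statement8 (k R : Type*) [CommRing k] [CommRing R] [Algebra k R]
    [Module.Finite R (Ω[R⁄k])] [Module.Projective R (Ω[R⁄k])]
    (n : ℕ) (hvanish : ⋀[R]^(n + 1) (Ω[R⁄k]) = ⊥)
    (htriv : Nonempty (↥(⋀[R]^n (Ω[R⁄k])) ≃ₗ[R] R))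
    (r : ℕ) (x : Fin r → Ω[R⁄k]) (f : Fin r → (Ω[R⁄k] →ₗ[R] R))
    (hdual : ∀ y : Ω[R⁄k], ∑ i : Fin r, f i y • x i = y) :
    ∑ i : Fin r, f i (x i) = (n : R) := by
  obtain ⟨e⟩ := htriv
  set c : R := ∑ i : Fin r, f i (x i) with hc'
  let v₀ : ↥(⋀[R]^n (Ω[R⁄k])) := e.symm 1
  have hv₀mem : (v₀ : ExteriorAlgebra R (Ω[R⁄k])) ∈
      (LinearMap.range (ExteriorAlgebra.ι R : (Ω[R⁄k]) →ₗ[R] ExteriorAlgebra R (Ω[R⁄k]))) ^ n := v₀.2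
  have hzero : ∀ i : Fin r,
      ExteriorAlgebra.ι R (x i) * (v₀ : ExteriorAlgebra R (Ω[R⁄k])) = 0 := by
    intro i
    have h1 : ExteriorAlgebra.ι R (x i) * (v₀ : ExteriorAlgebra R (Ω[R⁄k])) ∈
        (LinearMap.range (ExteriorAlgebra.ι R : (Ω[R⁄k]) →ₗ[R] ExteriorAlgebra R (Ω[R⁄k]))) ^ (n + 1) := by
      rw [pow_succ']
      exact Submodule.mul_mem_mul (LinearMap.mem_range_self _ _) hv₀mem
    have h2 : ExteriorAlgebra.ι R (x i) * (v₀ : ExteriorAlgebra R (Ω[R⁄k])) ∈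
        ⋀[R]^(n + 1) (Ω[R⁄k]) := h1
    rw [hvanish] at h2
    simpa using h2
  have hsum : (0 : ExteriorAlgebra R (Ω[R⁄k])) =
      c • (v₀ : ExteriorAlgebra R (Ω[R⁄k])) - n • (v₀ : ExteriorAlgebra R (Ω[R⁄k])) := by
    calc (0 : ExteriorAlgebra R (Ω[R⁄k]))
        = ∑ i : Fin r, (CliffordAlgebra.contractLeft (f i))
            (ExteriorAlgebra.ι R (x i) * (v₀ : ExteriorAlgebra R (Ω[R⁄k]))) := by
          simp [hzero]
      _ = ∑ i : Fin r, (f i (x i) • (v₀ : ExteriorAlgebra R (Ω[R⁄k]))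
            - ExteriorAlgebra.ι R (x i) * (CliffordAlgebra.contractLeft (f i)) (v₀ : ExteriorAlgebra R (Ω[R⁄k]))) := by
          refine Finset.sum_congr rfl fun i _ => ?_
          rw [CliffordAlgebra.contractLeft_ι_mul]
      _ = c • (v₀ : ExteriorAlgebra R (Ω[R⁄k])) - n • (v₀ : ExteriorAlgebra R (Ω[R⁄k])) := by
          rw [Finset.sum_sub_distrib, ← Finset.sum_smul,
            euler_op r x f hdual n _ hv₀mem, hc']
  have hsub : (c - (n : R)) • v₀ = 0 := by
    apply Subtype.ext
    rw [SetLike.val_smul, sub_smul, Nat.cast_smul_eq_nsmul, ZeroMemClass.coe_zero, ← hsum]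
  have hfin := congrArg e hsub
  rw [map_smul, map_zero, show e v₀ = 1 from e.apply_symm_apply 1, smul_eq_mul, mul_one,
    sub_eq_zero] at hfin
  exact hfin
end
end
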